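/- Let μ > 0, f : ℝ^d → ℝ be differentiable and μ-strongly convex with minimizer x⋆, and let X be a twice-differentiable solution of the Polyak damped oscillator X''(t) + 2√μ X'(t) + ∇f(X t) = 0. Define V(t) = f(X t) - f(x⋆) + (1/2)(μ ‖X t - x⋆‖² + 2√μ ⟪X t - x⋆, X'(t)⟫ + ‖X'(t)‖²). Then V(t) ≥ 0 and V'(t) ≤ -√μ V(t) for all t, hence V(t) ≤ exp(-√μ t) V(0). -/

import Mathlib

open scoped RealInnerProductSpace
open Real Set

theorem polyak_oscillator_lyapunov_sqrt_mu_rate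
    (d : ℕ) (μ : ℝ) (hμ : 0 < μ)
    (f : EuclideanSpace ℝ (Fin d) → ℝ) (hf : Differentiable ℝ f)
    (xstar : EuclideanSpace ℝ (Fin d))
    (hsc : ∀ x y, f y ≥ f x + ⟪gradient f x, y - x⟫ + (μ / 2) * ‖y - x‖ ^ 2)
    (hmin : ∀ y, f xstar ≤ f y)
    (X X' X'' : ℝ → EuclideanSpace ℝ (Fin d))
    (hX : ∀ t, HasDerivAt X (X' t) t)
    (hX' : ∀ t, HasDerivAt X' (X'' t) t)
    (hODE : ∀ t, X'' t + (2 * Real.sqrt μ) • X' t + gradient f (X t) = 0)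
    (V : ℝ → ℝ)
    (hV : ∀ t, V t = f (X t) - f xstar + (1 / 2) * (μ * ‖X t - xstar‖ ^ 2
        + 2 * Real.sqrt μ * ⟪X t - xstar, X' t⟫ + ‖X' t‖ ^ 2)) :
    (∀ t, 0 ≤ V t) ∧ (∀ t, deriv V t ≤ -Real.sqrt μ * V t) ∧
      ∀ t ≥ (0 : ℝ), V t ≤ Real.exp (-Real.sqrt μ * t) * V 0 := by
  set c := Real.sqrt μ with hcdef
  have hc : 0 < c := Real.sqrt_pos.mpr hμ
  have hc2 : c ^ 2 = μ := Real.sq_sqrt hμ.le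
  -- nonnegativity
  have hnn : ∀ t, 0 ≤ V t := by
    intro t
    have hsq : ‖c • (X t - xstar) + X' t‖ ^ 2
        = μ * ‖X t - xstar‖ ^ 2 + 2 * c * ⟪X t - xstar, X' t⟫ + ‖X' t‖ ^ 2 := by
      rw [norm_add_sq_real, norm_smul, real_inner_smul_left]
      simp [abs_of_pos hc, mul_pow]
      nlinarith [hc2]
    have := hmin (X t)
    rw [hV t, ← hsq]
    nlinarith [sq_nonneg ‖c • (X t - xstar) + X' t‖]
  -- derivative of V
  have hD : ∀ t, HasDerivAt V
      (⟪gradient f (X t), X' t⟫ + (1 / 2) * (μ * (⟪X t - xstar, X' t⟫ + ⟪X' t, X t - xstar⟫)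
        + 2 * c * (⟪X t - xstar, X'' t⟫ + ⟪X' t, X' t⟫)
        + (⟪X' t, X'' t⟫ + ⟪X'' t, X' t⟫))) t := by
    intro t
    have hfc : HasDerivAt (fun t => f (X t)) ⟪gradient f (X t), X' t⟫ t := by
      have hg := (hf (X t)).hasGradientAt
      have := hg.hasFDerivAt.comp_hasDerivAt t (hX t)
      rw [gradient, InnerProductSpace.toDual_symm_apply]
      exact (hf (X t)).hasFDerivAt.comp_hasDerivAt t (hX t)
    have hu : ∀ s, HasDerivAt (fun s => X s - xstar) (X' s) s := fun s => (hX s).sub_const _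
    have h1 : HasDerivAt (fun s => ⟪X s - xstar, X s - xstar⟫)
        (⟪X t - xstar, X' t⟫ + ⟪X' t, X t - xstar⟫) t := (hu t).inner ℝ (hu t)
    have h2 : HasDerivAt (fun s => ⟪X s - xstar, X' s⟫)
        (⟪X t - xstar, X'' t⟫ + ⟪X' t, X' t⟫) t := (hu t).inner ℝ (hX' t)
    have h3 : HasDerivAt (fun s => ⟪X' s, X' s⟫)
        (⟪X' t, X'' t⟫ + ⟪X'' t, X' t⟫) t := (hX' t).inner ℝ (hX' t)
    have hVeq : V = fun s => f (X s) - f xstar + (1 / 2) * (μ * ⟪X s - xstar, X s - xstar⟫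
        + 2 * c * ⟪X s - xstar, X' s⟫ + ⟪X' s, X' s⟫) := by
      funext s
      rw [hV s, real_inner_self_eq_norm_sq, real_inner_self_eq_norm_sq]
    rw [hVeq]
    have key := ((hfc.sub_const (f xstar)).add
      ((((h1.const_mul μ).add (h2.const_mul (2 * c))).add h3).const_mul (1 / 2)))
    exact key.congr_deriv (by ring)
  -- deriv inequality
  have hdle : ∀ t, deriv V t ≤ -c * V t := by
    intro t
    have hode : X'' t = -((2 * c) • X' t + gradient f (X t)) := by
      have h := hODE t
      rw [add_assoc] at h
      exact eq_neg_of_add_eq_zero_left h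
    have hkey : f (X t) - f xstar + μ / 2 * ‖X t - xstar‖ ^ 2
        ≤ ⟪gradient f (X t), X t - xstar⟫ := by
      have h := hsc (X t) xstar
      have e1 : ⟪gradient f (X t), xstar - X t⟫ = -⟪gradient f (X t), X t - xstar⟫ := by
        rw [← inner_neg_right]; congr 1; abel
      have e2 : ‖xstar - X t‖ = ‖X t - xstar‖ := norm_sub_rev _ _
      rw [e1, e2] at h
      linarith
    have e1 : ⟪X t - xstar, X'' t⟫
        = -(2 * c * ⟪X t - xstar, X' t⟫ + ⟪X t - xstar, gradient f (X t)⟫) := by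
      rw [hode, inner_neg_right, inner_add_right, real_inner_smul_right]
    have e2 : ⟪X' t, X'' t⟫
        = -(2 * c * ⟪X' t, X' t⟫ + ⟪X' t, gradient f (X t)⟫) := by
      rw [hode, inner_neg_right, inner_add_right, real_inner_smul_right]
    have e3 : ⟪X'' t, X' t⟫ = ⟪X' t, X'' t⟫ := real_inner_comm _ _
    have e4 : ⟪X' t, X t - xstar⟫ = ⟪X t - xstar, X' t⟫ := real_inner_comm _ _
    have e5 : ⟪gradient f (X t), X' t⟫ = ⟪X' t, gradient f (X t)⟫ := real_inner_comm _ _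
    have e6 : ⟪X t - xstar, gradient f (X t)⟫ = ⟪gradient f (X t), X t - xstar⟫ :=
      real_inner_comm _ _
    have e7 : ⟪X' t, X' t⟫ = ‖X' t‖ ^ 2 := real_inner_self_eq_norm_sq _
    rw [(hD t).deriv, hV t, e1, e2, e3, e4, e5, e6, e7, ← hc2] at *
    nlinarith [mul_le_mul_of_nonneg_left hkey hc.le, sq_nonneg ‖X' t‖, hc.le]
  refine ⟨hnn, hdle, ?_⟩
  -- Gronwall
  intro t ht
  set g : ℝ → ℝ := fun s => Real.exp (c * s) * V s with hg
  have hgd : ∀ s, HasDerivAt g (c * Real.exp (c * s) * V s + Real.exp (c * s) * deriv V s) s := by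
    intro s
    have he : HasDerivAt (fun s => Real.exp (c * s)) (Real.exp (c * s) * c) s := by
      simpa using ((hasDerivAt_id s).const_mul c).exp
    have := he.mul (hD s)
    rw [← (hD s).deriv] at this
    exact this.congr_deriv (by ring)
  have hgmono : AntitoneOn g (Ici (0 : ℝ)) := by
    apply antitoneOn_of_deriv_nonpos (convex_Ici 0)
    · exact fun s _ => (hgd s).differentiableAt.continuousAt.continuousWithinAt
    · intro s _
      exact ((hgd s).differentiableAt).differentiableWithinAt
    · intro s _
      rw [(hgd s).deriv]
      have h1 := hdle s
      have h2 := (Real.exp_pos (c * s)).le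
      nlinarith [mul_le_mul_of_nonneg_left h1 h2]
  have hgt : g t ≤ g 0 := hgmono (Set.mem_Ici.mpr (le_refl 0)) ht ht
  have hg0 : g 0 = V 0 := by simp [hg]
  rw [hg0] at hgt
  have hcalc : V t = Real.exp (-c * t) * (Real.exp (c * t) * V t) := by
    rw [← mul_assoc, ← Real.exp_add]
    simp
  rw [hcalc]
  exact mul_le_mul_of_nonneg_left hgt (Real.exp_pos _).le
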